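/- Let T̂ be a labeled dataset of size t−1, let T₁ = T̂ ∪ {(x₁,y₁)} and T₂ = T̂ ∪ {(x₁',y₁')} be labeled datasets of size t, and let W₁, W₂ be neighboring labeled datasets of the same size w. If h₁, h₂ : X → {0,1} agree on every unlabeled point of T̂, then the scores q(T∘W, h) = inf_{f∈C} ( dis_{T_X}(h,f) + err_W(f) ) satisfy q(T₂∘W₂, h₂) ≤ q(T₁∘W₁, h₁) + 1/t + 1/w, and by symmetry |q(T₁∘W₁, h₁) − q(T₂∘W₂, h₂)| ≤ 1/t + 1/w. -/

import Mathlib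

open MeasureTheory
open scoped ENNReal

/-- Two datasets (tuples) are neighboring if they differ in exactly one entry. -/
def Neighboring {Z : Type*} {n : ℕ} (S₁ S₂ : Fin n → Z) : Prop :=
  ∃ i, S₁ i ≠ S₂ i ∧ ∀ j, j ≠ i → S₁ j = S₂ j

/-- `(ε,δ)`-differential privacy of a randomized algorithm (a kernel into `PMF`s). -/
def IsDP {Z Ω : Type*} {n : ℕ} (A : (Fin n → Z) → PMF Ω) (ε δ : ℝ) : Prop :=
  ∀ S₁ S₂ : Fin n → Z, Neighboring S₁ S₂ → ∀ O : Set Ω,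
    (A S₁).toOuterMeasure O ≤ ENNReal.ofReal (Real.exp ε) * (A S₂).toOuterMeasure O
      + ENNReal.ofReal δ

/-- Generalization error of a hypothesis w.r.t. a distribution over `X × Bool`. -/
noncomputable def errD {X : Type*} [MeasurableSpace X] (D : Measure (X × Bool))
    (h : X → Bool) : ℝ :=
  (D {p | h p.1 ≠ p.2}).toReal

/-- Empirical error of a hypothesis on a labeled dataset. -/
noncomputable def errS {X : Type*} {n : ℕ} (S : Fin n → X × Bool) (h : X → Bool) : ℝ :=
  (Finset.univ.filter fun i => h (S i).1 ≠ (S i).2).card / n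

/-- Empirical disagreement between two hypotheses on an unlabeled dataset. -/
noncomputable def disS {X : Type*} {n : ℕ} (Sx : Fin n → X) (h₁ h₂ : X → Bool) : ℝ :=
  (Finset.univ.filter fun i => h₁ (Sx i) ≠ h₂ (Sx i)).card / n

/-- Generalization disagreement between two hypotheses w.r.t. a marginal distribution. -/
noncomputable def disD {X : Type*} [MeasurableSpace X] (DX : Measure X)
    (h₁ h₂ : X → Bool) : ℝ :=
  (DX {x | h₁ x ≠ h₂ x}).toReal

/-- The VC dimension of a concept class: the largest `d` such that some `d` distinct
points are shattered by `C`. -/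
noncomputable def vcDim {X : Type*} (C : Set (X → Bool)) : ℕ :=
  sSup {d : ℕ | ∃ f : Fin d → X, Function.Injective f ∧
    ∀ g : Fin d → Bool, ∃ c ∈ C, ∀ i, c (f i) = g i}

/-- The optimal (infimum) generalization error over the concept class. -/
noncomputable def optErr {X : Type*} [MeasurableSpace X] (C : Set (X → Bool))
    (D : Measure (X × Bool)) : ℝ :=
  ⨅ c : C, errD D (c : X → Bool)

/-- `(α,β)`-PAC learner (realizable setting) with sample complexity `m`. -/
def IsPACLearner {X : Type*} [MeasurableSpace X] (C : Set (X → Bool)) (α β : ℝ) {m : ℕ}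
    (A : (Fin m → X × Bool) → PMF (X → Bool)) : Prop :=
  ∀ D : Measure (X × Bool), IsProbabilityMeasure D → (∃ c ∈ C, errD D c = 0) →
    ENNReal.ofReal (1 - β) ≤
      ∫⁻ S, (A S).toOuterMeasure {h | errD D h ≤ α} ∂(Measure.pi fun _ : Fin m => D)

/-- `(α,β)`-agnostic learner with sample complexity `n`. -/
def IsAgnosticLearner {X : Type*} [MeasurableSpace X] (C : Set (X → Bool)) (α β : ℝ) {n : ℕ}
    (A : (Fin n → X × Bool) → PMF (X → Bool)) : Prop :=
  ∀ D : Measure (X × Bool), IsProbabilityMeasure D →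
    ENNReal.ofReal (1 - β) ≤
      ∫⁻ S, (A S).toOuterMeasure {h | errD D h ≤ optErr C D + α}
        ∂(Measure.pi fun _ : Fin n => D)

/-- A learner is proper if it always outputs a hypothesis in `C`. -/
def IsProper {X : Type*} {n : ℕ} (C : Set (X → Bool))
    (A : (Fin n → X × Bool) → PMF (X → Bool)) : Prop :=
  ∀ S, (A S).support ⊆ C

/-- `(α,β)`-PAC empirical learner with sample complexity `m`. -/
def IsEmpiricalLearner {X : Type*} (C : Set (X → Bool)) (α β : ℝ) {m : ℕ}
    (A : (Fin m → X × Bool) → PMF (X → Bool)) : Prop :=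
  ∀ c ∈ C, ∀ Sx : Fin m → X,
    ENNReal.ofReal (1 - β) ≤
      (A fun i => (Sx i, c (Sx i))).toOuterMeasure
        {h | errS (fun i => (Sx i, c (Sx i))) h ≤ α}

/-- The exponential mechanism over a finite nonempty type, with the given exponents:
it outputs `h` with probability proportional to `exp (score h)`. -/
noncomputable def expMech {H : Type*} [Fintype H] [Nonempty H] (score : H → ℝ) : PMF H :=
  ⟨fun h => ENNReal.ofReal (Real.exp (score h)) / ∑ f, ENNReal.ofReal (Real.exp (score f)), by
    have h0 : (∑ f, ENNReal.ofReal (Real.exp (score f))) ≠ 0 := by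
      intro hsum
      rw [Finset.sum_eq_zero_iff] at hsum
      obtain ⟨a⟩ := (inferInstance : Nonempty H)
      have ha := hsum a (Finset.mem_univ a)
      rw [ENNReal.ofReal_eq_zero] at ha
      exact absurd ha (not_le.mpr (Real.exp_pos _))
    have htop : (∑ f, ENNReal.ofReal (Real.exp (score f))) ≠ ⊤ :=
      (ENNReal.sum_lt_top.mpr fun f _ => ENNReal.ofReal_lt_top).ne
    have key : ∑ h, ENNReal.ofReal (Real.exp (score h)) /
        ∑ f, ENNReal.ofReal (Real.exp (score f)) = 1 := by
      simp only [div_eq_mul_inv]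
      rw [← Finset.sum_mul]
      exact ENNReal.mul_inv_cancel h0 htop
    have hs := hasSum_fintype (fun h => ENNReal.ofReal (Real.exp (score h)) /
      ∑ f, ENNReal.ofReal (Real.exp (score f)))
    rwa [key] at hs⟩

/-- The score used by the relabeling procedure: `q(T∘W, h) = inf_{f∈C} (dis_{T_X}(h,f) + err_W(f))`. -/
noncomputable def qScore {X : Type*} (C : Set (X → Bool)) {t w : ℕ}
    (T : Fin t → X × Bool) (W : Fin w → X × Bool) (h : X → Bool) : ℝ :=
  ⨅ f : C, (disS (fun i => (T i).1) h (f : X → Bool) + errS W (f : X → Bool))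

/-- The hypothesis-selection step of the relabeling procedure `Rel`:
the candidate set contains, for each labeling of `T_X` realized by `C`, the concept
`pick g ∈ C` chosen for that labeling; a hypothesis is selected by the exponential
mechanism with privacy parameter `ε`, score `qScore`, and sensitivity `Δ = 1/|W|`. -/
noncomputable def relPMF {X : Type*} (C : Set (X → Bool)) (hC : C.Nonempty) (ε : ℝ)
    {t w : ℕ} (T : Fin t → X × Bool) (W : Fin w → X × Bool)
    (pick : (Fin t → Bool) → (X → Bool)) : PMF (X → Bool) :=
  letI : Fintype {g : Fin t → Bool // ∃ c ∈ C, ∀ i, c (T i).1 = g i} := Fintype.ofFinite _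
  haveI : Nonempty {g : Fin t → Bool // ∃ c ∈ C, ∀ i, c (T i).1 = g i} := by
    obtain ⟨c, hc⟩ := hC
    exact ⟨⟨fun i => c (T i).1, ⟨c, hc, fun _ => rfl⟩⟩⟩
  (expMech fun ℓ : {g : Fin t → Bool // ∃ c ∈ C, ∀ i, c (T i).1 = g i} =>
      -(ε * qScore C T W (pick ℓ.1) * w) / 2).map fun ℓ => pick ℓ.1

/-- The relabeling procedure `Rel`: select `h` as in `relPMF` and output `T` relabeled by `h`. -/
noncomputable def RelProc {X : Type*} (C : Set (X → Bool)) (hC : C.Nonempty) (ε : ℝ)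
    {t w : ℕ} (T : Fin t → X × Bool) (W : Fin w → X × Bool)
    (pick : (Fin t → Bool) → (X → Bool)) : PMF (Fin t → X × Bool) :=
  (relPMF C hC ε T W pick).map fun h i => ((T i).1, h (T i).1)

/-- The algorithm `Agn`: sample a uniformly random index set `I` of size `k`, split the
input into `T` (indexed by `I`) and `W` (the rest), run `Rel` with parameter `ε` on
`(T, W)` to obtain the relabeled dataset `T^h`, and output `A(T^h)`. -/
noncomputable def Agn {X Ω : Type*} (C : Set (X → Bool)) (hC : C.Nonempty) (ε : ℝ)
    {n k : ℕ} (hk : k ≤ n)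
    (A : (Fin k → X × Bool) → PMF Ω)
    (pick : (Fin k → X) → (Fin k → Bool) → (X → Bool))
    (S : Fin n → X × Bool) : PMF Ω :=
  haveI : Nonempty {I : Finset (Fin n) // I.card = k} := by
    obtain ⟨t, -, ht⟩ := Finset.exists_subset_card_eq
      (show k ≤ (Finset.univ : Finset (Fin n)).card by simpa using hk)
    exact ⟨⟨t, ht⟩⟩
  (PMF.uniformOfFintype {I : Finset (Fin n) // I.card = k}).bind fun I =>
    (RelProc C hC ε (fun j => S (I.1.orderIsoOfFin I.2 j).1)
        (fun j => S ((I.1ᶜ.orderIsoOfFin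
          (show I.1ᶜ.card = n - k by simp [Finset.card_compl, I.2]) j)).1)
        (pick fun j => (S (I.1.orderIsoOfFin I.2 j).1).1)).bind fun Th =>
      A Th

/-- The auxiliary algorithm `Aux`: run `Rel` on `T = U ∘ V` and `W` to obtain `T^h`,
select `h̄ = hbar V^h ∈ C` consistent with `V^h`, and output `A(T^h) ⊕ h̄`. -/
noncomputable def Aux {X : Type*} (C : Set (X → Bool)) (hC : C.Nonempty) (ε : ℝ)
    {u v w : ℕ} (U : Fin u → X × Bool) (V : Fin v → X × Bool) (W : Fin w → X × Bool)
    (pick : (Fin (u + v) → X) → (Fin (u + v) → Bool) → (X → Bool))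
    (hbar : (Fin v → X × Bool) → (X → Bool))
    (A : (Fin (u + v) → X × Bool) → PMF (X → Bool)) : PMF (X → Bool) :=
  (relPMF C hC ε (Fin.append U V) W (pick fun i => (Fin.append U V i).1)).bind fun h =>
    (A fun i => ((Fin.append U V i).1, h (Fin.append U V i).1)).map fun g x =>
      xor (g x) (hbar (fun j => ((V j).1, h (V j).1)) x)

/-- Error of a private prediction algorithm: the probability over `(x,y) ~ D` and the
algorithm's coins that the prediction on `x` differs from `y`. -/
noncomputable def errPred {X : Type*} [MeasurableSpace X] (D : Measure (X × Bool)) {n : ℕ}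
    (A : (Fin n → X × Bool) → X → PMF Bool) (S : Fin n → X × Bool) : ℝ :=
  (∫⁻ p, (A S p.1).toOuterMeasure {b | b ≠ p.2} ∂D).toReal

private lemma count_le_aux {n : ℕ} (p q : Fin n → Prop) [DecidablePred p] [DecidablePred q]
    (i : Fin n) (h : ∀ j, j ≠ i → p j → q j) :
    ((Finset.univ.filter p).card : ℝ) ≤ (Finset.univ.filter q).card + 1 := by
  have hsub : Finset.univ.filter p ⊆ insert i (Finset.univ.filter q) := by
    intro j hj
    rcases eq_or_ne j i with rfl | hne
    · exact Finset.mem_insert_self _ _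
    · exact Finset.mem_insert_of_mem (by
        simp only [Finset.mem_filter, Finset.mem_univ, true_and] at hj ⊢
        exact h j hne hj)
  have := Finset.card_le_card hsub
  have h2 := Finset.card_insert_le i (Finset.univ.filter q)
  exact_mod_cast this.trans h2

private lemma div_compare {n : ℕ} (hn : 0 < n) (a b : ℕ) (hab : (a : ℝ) ≤ b + 1) :
    (a : ℝ) / n ≤ (b : ℝ) / n + 1 / n := by
  rw [← add_div]
  exact div_le_div_of_nonneg_right hab (by positivity) |>.trans_eq rfl

private lemma errS_nonneg {X : Type*} {n : ℕ} (S : Fin n → X × Bool) (h : X → Bool) :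
    0 ≤ errS S h := by unfold errS; positivity

private lemma disS_nonneg {X : Type*} {n : ℕ} (Sx : Fin n → X) (h₁ h₂ : X → Bool) :
    0 ≤ disS Sx h₁ h₂ := by unfold disS; positivity

private lemma qScore_le_aux {X : Type*} (C : Set (X → Bool)) (hC : C.Nonempty)
    {t w : ℕ} (T₁ T₂ : Fin t → X × Bool) (i : Fin t)
    (hT : ∀ j, j ≠ i → T₁ j = T₂ j)
    (W₁ W₂ : Fin w → X × Bool) (hW : Neighboring W₁ W₂)
    (h₁ h₂ : X → Bool) (hagree : ∀ j, j ≠ i → h₁ (T₁ j).1 = h₂ (T₂ j).1) :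
    qScore C T₂ W₂ h₂ ≤ qScore C T₁ W₁ h₁ + 1 / (t : ℝ) + 1 / (w : ℝ) := by
  obtain ⟨k, -, hWk⟩ := hW
  have ht : 0 < t := i.pos
  have hw : 0 < w := k.pos
  haveI : Nonempty C := hC.to_subtype
  have key : ∀ f : C,
      disS (fun j => (T₂ j).1) h₂ (f : X → Bool) + errS W₂ (f : X → Bool) ≤
      disS (fun j => (T₁ j).1) h₁ (f : X → Bool) + errS W₁ (f : X → Bool)
        + 1 / (t : ℝ) + 1 / (w : ℝ) := by
    intro f
    have hdis : disS (fun j => (T₂ j).1) h₂ (f : X → Bool) ≤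
        disS (fun j => (T₁ j).1) h₁ (f : X → Bool) + 1 / (t : ℝ) := by
      unfold disS
      apply div_compare ht
      apply count_le_aux _ _ i
      intro j hj hpj
      show h₁ (T₁ j).1 ≠ (f : X → Bool) (T₁ j).1
      rw [hagree j hj, hT j hj]
      exact hpj
    have herr : errS W₂ (f : X → Bool) ≤ errS W₁ (f : X → Bool) + 1 / (w : ℝ) := by
      unfold errS
      apply div_compare hw
      apply count_le_aux _ _ k
      intro j hj hpj
      rw [← hWk j hj] at hpj
      exact hpj
    linarith
  have hbdd : BddBelow (Set.range fun f : C =>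
      disS (fun j => (T₂ j).1) h₂ (f : X → Bool) + errS W₂ (f : X → Bool)) := by
    refine ⟨0, ?_⟩
    rintro x ⟨f, rfl⟩
    exact add_nonneg (disS_nonneg _ _ _) (errS_nonneg _ _)
  have main : qScore C T₂ W₂ h₂ - (1 / (t : ℝ) + 1 / (w : ℝ)) ≤
      ⨅ f : C, (disS (fun j => (T₁ j).1) h₁ (f : X → Bool) + errS W₁ (f : X → Bool)) := by
    apply le_ciInf
    intro f
    have hle : qScore C T₂ W₂ h₂ ≤
        disS (fun j => (T₂ j).1) h₂ (f : X → Bool) + errS W₂ (f : X → Bool) :=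
      ciInf_le hbdd f
    have h2 := key f
    linarith
  have hq : qScore C T₁ W₁ h₁ =
      ⨅ f : C, (disS (fun j => (T₁ j).1) h₁ (f : X → Bool) + errS W₁ (f : X → Bool)) := rfl
  rw [hq]
  linarith

/-- score comparison across datasets sharing `T̂` for hypotheses that
agree on `T̂`. -/
theorem score_sensitivity_in_T {X : Type*} (C : Set (X → Bool)) (hC : C.Nonempty)
    {t w : ℕ} (T₁ T₂ : Fin t → X × Bool) (i : Fin t)
    (hT : ∀ j, j ≠ i → T₁ j = T₂ j)
    (W₁ W₂ : Fin w → X × Bool) (hW : Neighboring W₁ W₂)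
    (h₁ h₂ : X → Bool) (hagree : ∀ j, j ≠ i → h₁ (T₁ j).1 = h₂ (T₂ j).1) :
    qScore C T₂ W₂ h₂ ≤ qScore C T₁ W₁ h₁ + 1 / (t : ℝ) + 1 / (w : ℝ) ∧
    |qScore C T₁ W₁ h₁ - qScore C T₂ W₂ h₂| ≤ 1 / (t : ℝ) + 1 / (w : ℝ) := by
  have h12 := qScore_le_aux C hC T₁ T₂ i hT W₁ W₂ hW h₁ h₂ hagree
  have hW' : Neighboring W₂ W₁ := by
    obtain ⟨k, hk, hk'⟩ := hW
    exact ⟨k, hk.symm, fun j hj => (hk' j hj).symm⟩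
  have h21 := qScore_le_aux C hC T₂ T₁ i (fun j hj => (hT j hj).symm) W₂ W₁ hW'
    h₂ h₁ (fun j hj => (hagree j hj).symm)
  refine ⟨h12, abs_sub_le_iff.mpr ⟨by linarith, by linarith⟩⟩
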